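/- Define p_0(x) = 1 and p_n(x) = x · B_{n-1,n}^q(x) for n ≥ 1. Then (p_n) is the basic sequence of the delta operator Δ_q: p_n(0) = 0 for every n ≥ 1, and Σ_{k=l}^{m} a_k · p_n(x+k) = n · p_{n-1}(x) for every n ≥ 1. -/

import Mathlib

open PowerSeries Polynomial

lemma myE_eq : (PowerSeries.mk fun n => ((n.factorial : ℚ)⁻¹) • (Polynomial.X : Polynomial ℚ) ^ n)
    = rescale (Polynomial.X : Polynomial ℚ) (exp (Polynomial ℚ)) := by
  ext n
  simp [coeff_rescale, exp, one_div, Polynomial.smul_eq_C_mul, Algebra.algebraMap_eq_smul_one]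

lemma myEk_eq (κ : ℚ) : (PowerSeries.mk fun n => ((n.factorial : ℚ)⁻¹) • ((Polynomial.X : Polynomial ℚ) + Polynomial.C κ) ^ n)
    = rescale ((Polynomial.X : Polynomial ℚ) + Polynomial.C κ) (exp (Polynomial ℚ)) := by
  ext n
  simp [coeff_rescale, exp, one_div, Polynomial.smul_eq_C_mul, Algebra.algebraMap_eq_smul_one]
  ring

lemma myR_eq (κ : ℚ) : PowerSeries.map (Polynomial.C : ℚ →+* Polynomial ℚ)
      (PowerSeries.mk fun n => κ ^ n * ((n.factorial : ℚ)⁻¹))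
    = rescale (Polynomial.C κ) (exp (Polynomial ℚ)) := by
  ext n
  simp [coeff_rescale, exp, one_div, Algebra.algebraMap_eq_smul_one, Polynomial.smul_eq_C_mul]

lemma step5 (κ : ℚ) :
    (PowerSeries.mk fun n => ((n.factorial : ℚ)⁻¹) • ((Polynomial.X : Polynomial ℚ) + Polynomial.C κ) ^ n)
    = (PowerSeries.mk fun n => ((n.factorial : ℚ)⁻¹) • (Polynomial.X : Polynomial ℚ) ^ n)
      * PowerSeries.map (Polynomial.C : ℚ →+* Polynomial ℚ)
          (PowerSeries.mk fun n => κ ^ n * ((n.factorial : ℚ)⁻¹)) := by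
  rw [myE_eq, myEk_eq, myR_eq, exp_mul_exp_eq_exp_add]

lemma compB (J : ℤ → PowerSeries ℚ) (B : ℤ → ℕ → Polynomial ℚ)
    (hB : ∀ a : ℤ,
      (PowerSeries.map (Polynomial.C : ℚ →+* Polynomial ℚ) (J a)) *
        (PowerSeries.mk fun n => ((n.factorial : ℚ)⁻¹) • (Polynomial.X : Polynomial ℚ) ^ n) =
      PowerSeries.mk fun n => ((n.factorial : ℚ)⁻¹) • B a n)
    (a : ℤ) (κ : ℚ) :
    (PowerSeries.map (Polynomial.C : ℚ →+* Polynomial ℚ) (J a)) *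
        (PowerSeries.mk fun n => ((n.factorial : ℚ)⁻¹) • ((Polynomial.X : Polynomial ℚ) + Polynomial.C κ) ^ n) =
      PowerSeries.mk fun n => ((n.factorial : ℚ)⁻¹) • ((B a n).comp (Polynomial.X + Polynomial.C κ)) := by
  set φ : Polynomial ℚ →+* Polynomial ℚ :=
    Polynomial.eval₂RingHom Polynomial.C (Polynomial.X + Polynomial.C κ) with hφ
  have hφC : ∀ r : ℚ, φ (Polynomial.C r) = Polynomial.C r := fun r => Polynomial.eval₂_C _ _
  have hφsmul : ∀ (r : ℚ) (q : Polynomial ℚ), φ (r • q) = r • φ q := by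
    intro r q
    rw [Polynomial.smul_eq_C_mul, map_mul, hφC, ← Polynomial.smul_eq_C_mul]
  have h := congrArg (PowerSeries.map φ) (hB a)
  rw [map_mul] at h
  have h1 : PowerSeries.map φ (PowerSeries.map (Polynomial.C : ℚ →+* Polynomial ℚ) (J a))
      = PowerSeries.map (Polynomial.C : ℚ →+* Polynomial ℚ) (J a) := by
    ext n; simp [PowerSeries.coeff_map, hφC]
  have h2 : PowerSeries.map φ (PowerSeries.mk fun n => ((n.factorial : ℚ)⁻¹) • (Polynomial.X : Polynomial ℚ) ^ n)
      = PowerSeries.mk fun n => ((n.factorial : ℚ)⁻¹) • ((Polynomial.X : Polynomial ℚ) + Polynomial.C κ) ^ n := by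
    ext n
    simp only [PowerSeries.coeff_map, PowerSeries.coeff_mk, hφsmul, map_pow]
    congr 1
    simp [hφ]
  have h3 : PowerSeries.map φ (PowerSeries.mk fun n => ((n.factorial : ℚ)⁻¹) • B a n)
      = PowerSeries.mk fun n => ((n.factorial : ℚ)⁻¹) • ((B a n).comp (Polynomial.X + Polynomial.C κ)) := by
    ext n
    simp only [PowerSeries.coeff_map, PowerSeries.coeff_mk, hφsmul]
    rw [hφ, Polynomial.comp, Polynomial.coe_eval₂RingHom]
  rw [h1, h2, h3] at h
  exact h

lemma mapC_smul (r : ℚ) (s : PowerSeries ℚ) :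
    PowerSeries.map (Polynomial.C : ℚ →+* Polynomial ℚ) (r • s)
    = r • PowerSeries.map (Polynomial.C : ℚ →+* Polynomial ℚ) s := by
  ext n
  simp [PowerSeries.coeff_map, PowerSeries.coeff_smul, Polynomial.smul_eq_C_mul]

lemma sumB (l m : ℤ) (w : ℤ → ℚ) (J : ℤ → PowerSeries ℚ) (B : ℤ → ℕ → Polynomial ℚ)
    (hB : ∀ a : ℤ,
      (PowerSeries.map (Polynomial.C : ℚ →+* Polynomial ℚ) (J a)) *
        (PowerSeries.mk fun n => ((n.factorial : ℚ)⁻¹) • (Polynomial.X : Polynomial ℚ) ^ n) =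
      PowerSeries.mk fun n => ((n.factorial : ℚ)⁻¹) • B a n)
    (a : ℤ) (d : ℕ) :
    ∑ k ∈ Finset.Icc l m, w k • ((B a d).comp (Polynomial.X + Polynomial.C (k : ℚ)))
    = (d.factorial : ℚ) • (PowerSeries.coeff d
        (PowerSeries.map (Polynomial.C : ℚ →+* Polynomial ℚ)
          (J a * (PowerSeries.mk fun n => (∑ k ∈ Finset.Icc l m, w k * (k : ℚ) ^ n) * ((n.factorial : ℚ)⁻¹)))
         * (PowerSeries.mk fun n => ((n.factorial : ℚ)⁻¹) • (Polynomial.X : Polynomial ℚ) ^ n))) := by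
  set E := PowerSeries.mk fun n => ((n.factorial : ℚ)⁻¹) • (Polynomial.X : Polynomial ℚ) ^ n with hE
  set R : ℤ → PowerSeries ℚ := fun k => PowerSeries.mk fun n => (k : ℚ) ^ n * ((n.factorial : ℚ)⁻¹) with hR
  have hW : (PowerSeries.mk fun n => (∑ k ∈ Finset.Icc l m, w k * (k : ℚ) ^ n) * ((n.factorial : ℚ)⁻¹))
      = ∑ k ∈ Finset.Icc l m, w k • R k := by
    ext n
    rw [map_sum]
    simp only [PowerSeries.coeff_mk, PowerSeries.coeff_smul, hR, Finset.sum_mul, smul_eq_mul]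
    exact Finset.sum_congr rfl fun k _ => by ring
  -- expand the RHS series as a sum
  have key : PowerSeries.map (Polynomial.C : ℚ →+* Polynomial ℚ)
        (J a * (PowerSeries.mk fun n => (∑ k ∈ Finset.Icc l m, w k * (k : ℚ) ^ n) * ((n.factorial : ℚ)⁻¹))) * E
      = ∑ k ∈ Finset.Icc l m, w k •
          (PowerSeries.map (Polynomial.C : ℚ →+* Polynomial ℚ) (J a) *
            (E * PowerSeries.map (Polynomial.C : ℚ →+* Polynomial ℚ) (R k))) := by
    rw [hW, Finset.mul_sum, map_sum, Finset.sum_mul]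
    refine Finset.sum_congr rfl fun k _ => ?_
    rw [mul_smul_comm, mapC_smul, smul_mul_assoc, map_mul]
    ring_nf
  rw [key, map_sum]
  have hterm : ∀ k ∈ Finset.Icc l m,
      w k • ((B a d).comp (Polynomial.X + Polynomial.C (k : ℚ)))
      = (d.factorial : ℚ) • (w k • (PowerSeries.coeff d
          (PowerSeries.map (Polynomial.C : ℚ →+* Polynomial ℚ) (J a) *
            (E * PowerSeries.map (Polynomial.C : ℚ →+* Polynomial ℚ) (R k))))) := by
    intro k _
    have hcomp := compB J B hB a (k : ℚ)
    rw [step5 (k : ℚ)] at hcomp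
    have := congrArg (PowerSeries.coeff d) hcomp
    rw [PowerSeries.coeff_mk] at this
    rw [← hE] at this
    simp only [hR]
    rw [this, smul_smul, smul_smul]
    congr 1
    have hd : (d.factorial : ℚ) ≠ 0 := Nat.cast_ne_zero.mpr d.factorial_ne_zero
    field_simp
  rw [Finset.sum_congr rfl hterm, ← Finset.smul_sum]
  simp [PowerSeries.coeff_smul]

lemma derivJ (J : ℤ → PowerSeries ℚ) (hJ0 : J 0 = 1)
    (hJadd : ∀ a b : ℤ, J (a + b) = J a * J b) :
    ∀ b : ℤ, d⁄dX ℚ (J b) = (b : PowerSeries ℚ) * (J (b - 1) * d⁄dX ℚ (J 1)) := by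
  have hmul : ∀ a b : ℤ, J a * J b = J (a + b) := fun a b => (hJadd a b).symm
  have f1 : J (-1) * J 1 = 1 := by rw [hmul]; norm_num [hJ0]
  have f2 : J (-1) * J (-1) = J (-2) := by rw [hmul]; norm_num
  have e : (J 1) * d⁄dX ℚ (J (-1)) + (J (-1)) * d⁄dX ℚ (J 1) = 0 := by
    have e0 : d⁄dX ℚ (J 1 * J (-1)) = 0 := by
      rw [hmul]; norm_num [hJ0]
    rwa [Derivation.leibniz, smul_eq_mul, smul_eq_mul] at e0
  have dJm1 : d⁄dX ℚ (J (-1)) = -(J (-2) * d⁄dX ℚ (J 1)) := by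
    linear_combination J (-1) * e - d⁄dX ℚ (J (-1)) * f1 - d⁄dX ℚ (J 1) * f2
  intro b
  induction b using Int.induction_on with
  | zero => simp [hJ0]
  | succ i ih =>
      have h1 : J ((i : ℤ) + 1) = J i * J 1 := hJadd i 1
      have h2 : d⁄dX ℚ (J ((i : ℤ) + 1)) = J i * d⁄dX ℚ (J 1) + J 1 * d⁄dX ℚ (J i) := by
        rw [h1, Derivation.leibniz, smul_eq_mul, smul_eq_mul]
      have h3 : J 1 * J ((i : ℤ) - 1) = J i := by rw [hmul]; ring_nf
      have h4 : ((i : ℤ) + 1 - 1) = (i : ℤ) := by ring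
      push_cast at ih ⊢
      rw [h2, ih, h4]
      linear_combination ((i : ℕ) : PowerSeries ℚ) * d⁄dX ℚ (J 1) * h3
  | pred i ih =>
      have h1 : J (-(i : ℤ) - 1) = J (-i) * J (-1) := by rw [hmul]; ring_nf
      have h2 : d⁄dX ℚ (J (-(i : ℤ) - 1)) = J (-i) * d⁄dX ℚ (J (-1)) + J (-1) * d⁄dX ℚ (J (-i)) := by
        rw [h1, Derivation.leibniz, smul_eq_mul, smul_eq_mul]
      have h3 : J (-(i : ℤ)) * J (-2) = J (-(i : ℤ) - 1 - 1) := by rw [hmul]; ring_nf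
      have h4 : J (-1) * J (-(i : ℤ) - 1) = J (-(i : ℤ) - 1 - 1) := by rw [hmul]; ring_nf
      push_cast at ih ⊢
      rw [h2, ih, dJm1]
      linear_combination (- d⁄dX ℚ (J 1)) * h3 + (-((i:ℕ) : PowerSeries ℚ)) * d⁄dX ℚ (J 1) * h4

lemma mapC_deriv (f : PowerSeries ℚ) :
    PowerSeries.map (Polynomial.C : ℚ →+* Polynomial ℚ) (d⁄dX ℚ f)
    = d⁄dX (Polynomial ℚ) (PowerSeries.map (Polynomial.C : ℚ →+* Polynomial ℚ) f) := by
  ext n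
  simp [PowerSeries.coeff_map, PowerSeries.coeff_derivative]

lemma derivE : d⁄dX (Polynomial ℚ)
      (PowerSeries.mk fun n => ((n.factorial : ℚ)⁻¹) • (Polynomial.X : Polynomial ℚ) ^ n)
    = PowerSeries.C (Polynomial.X : Polynomial ℚ) *
      (PowerSeries.mk fun n => ((n.factorial : ℚ)⁻¹) • (Polynomial.X : Polynomial ℚ) ^ n) := by
  apply PowerSeries.ext; intro n
  rw [PowerSeries.coeff_derivative, PowerSeries.coeff_C_mul, PowerSeries.coeff_mk, PowerSeries.coeff_mk]
  rw [Polynomial.smul_eq_C_mul, Polynomial.smul_eq_C_mul]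
  have h : ((n + 1).factorial : ℚ)⁻¹ * (n + 1 : ℚ) = ((n.factorial : ℚ))⁻¹ := by
    rw [Nat.factorial_succ]
    have h1 : (n.factorial : ℚ) ≠ 0 := Nat.cast_ne_zero.mpr n.factorial_ne_zero
    have h2 : ((n:ℚ) + 1) ≠ 0 := by positivity
    field_simp
    push_cast; ring
  calc Polynomial.C ((n + 1).factorial : ℚ)⁻¹ * Polynomial.X ^ (n+1) * ((n:Polynomial ℚ) + 1)
      = Polynomial.C (((n + 1).factorial : ℚ)⁻¹ * (n + 1 : ℚ)) * Polynomial.X ^ (n+1) := by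
        simp only [map_mul, map_add, map_one, map_natCast]
        push_cast
        ring
    _ = Polynomial.X * (Polynomial.C (n.factorial : ℚ)⁻¹ * Polynomial.X ^ n) := by
        rw [h]; ring

lemma deriv_mul' (f g : PowerSeries (Polynomial ℚ)) :
    d⁄dX (Polynomial ℚ) (f * g) = f * d⁄dX (Polynomial ℚ) g + g * d⁄dX (Polynomial ℚ) f := by
  show (f * g).derivativeFun = _
  rw [PowerSeries.derivativeFun_mul, smul_eq_mul, smul_eq_mul]
  rfl

/-- with p_0(x) = 1 and p_n(x) = x·B_{n-1,n}^q(x), the sequence (p_n) is the basic sequence of Δ_q: p_n(0) = 0 and Δ_q p_n = n·p_{n-1} for n ≥ 1. -/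

theorem basic_sequence_from_bernoulli_type
    (l m : ℤ) (hlm : l < m) (c : ℤ → ℚ)
    (hc0 : ∑ k ∈ Finset.Icc l m, c k = 0)
    (hc1 : ∑ k ∈ Finset.Icc l m, (k : ℚ) * c k = 1)
    -- `J a = (t/Δ_q(t))^a`, where the indicator `Δ_q(t)` has coefficients
    -- `(∑_k c_k kⁿ)/n!`:
    (J : ℤ → PowerSeries ℚ)
    (hJ0 : J 0 = 1)
    (hJadd : ∀ a b : ℤ, J (a + b) = J a * J b)
    (hJ1 : J 1 * (PowerSeries.mk fun n =>
        (∑ k ∈ Finset.Icc l m, c k * (k : ℚ) ^ n) / (n.factorial : ℚ)) = PowerSeries.X)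
    -- the higher-order Bernoulli-type polynomials `B a n = B_{n,a}^q`:
    (B : ℤ → ℕ → Polynomial ℚ)
    (hB : ∀ a : ℤ,
      (PowerSeries.map (Polynomial.C : ℚ →+* Polynomial ℚ) (J a)) *
        (PowerSeries.mk fun n => ((n.factorial : ℚ)⁻¹) • (Polynomial.X : Polynomial ℚ) ^ n) =
      PowerSeries.mk fun n => ((n.factorial : ℚ)⁻¹) • B a n)
    (p : ℕ → Polynomial ℚ)
    (hp0 : p 0 = 1)
    (hpn : ∀ n : ℕ, 1 ≤ n → p n = Polynomial.X * B (n : ℤ) (n - 1)) :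
    ∀ n : ℕ, 1 ≤ n →
      (p n).eval 0 = 0 ∧
      ∑ k ∈ Finset.Icc l m, c k • (p n).comp (Polynomial.X + Polynomial.C (k : ℚ)) =
        (n : ℚ) • p (n - 1) := by
  classical
  set Dser : PowerSeries ℚ := PowerSeries.mk fun n =>
      (∑ k ∈ Finset.Icc l m, c k * (k : ℚ) ^ n) / (n.factorial : ℚ) with hDser
  set E : PowerSeries (Polynomial ℚ) :=
      PowerSeries.mk fun n => ((n.factorial : ℚ)⁻¹) • (Polynomial.X : Polynomial ℚ) ^ n with hE
  -- basic facts
  have JD : ∀ a : ℤ, J a * Dser = PowerSeries.X * J (a - 1) := by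
    intro a
    have h : J a = J (a - 1) * J 1 := by rw [← hJadd]; ring_nf
    rw [h, mul_assoc, hJ1, mul_comm (J (a-1))]
  have e1 : d⁄dX ℚ (J 1) * Dser + J 1 * d⁄dX ℚ Dser = 1 := by
    have h := congrArg (d⁄dX ℚ) hJ1
    rw [PowerSeries.derivative_X, Derivation.leibniz, smul_eq_mul, smul_eq_mul] at h
    linear_combination h
  -- derivative of Dser as weighted sum series
  have hW2 : (PowerSeries.mk fun n =>
        (∑ k ∈ Finset.Icc l m, (c k * (k:ℚ)) * (k : ℚ) ^ n) * ((n.factorial : ℚ)⁻¹))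
      = d⁄dX ℚ Dser := by
    ext n
    rw [PowerSeries.coeff_mk, PowerSeries.coeff_derivative, hDser, PowerSeries.coeff_mk]
    have hsum : ∑ k ∈ Finset.Icc l m, (c k * (k:ℚ)) * (k : ℚ) ^ n
        = ∑ k ∈ Finset.Icc l m, c k * (k : ℚ) ^ (n+1) :=
      Finset.sum_congr rfl fun k _ => by ring
    rw [hsum]
    have h1 : (n.factorial : ℚ) ≠ 0 := Nat.cast_ne_zero.mpr n.factorial_ne_zero
    have h2 : ((n+1).factorial : ℚ) = ((n:ℚ)+1) * (n.factorial : ℚ) := by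
      rw [Nat.factorial_succ]; push_cast; ring
    have h3 : ((n:ℚ)+1) ≠ 0 := by positivity
    rw [h2]
    field_simp
  -- Dser rewritten in the * inverse form used by sumB
  have hD' : (PowerSeries.mk fun n =>
        (∑ k ∈ Finset.Icc l m, c k * (k : ℚ) ^ n) * ((n.factorial : ℚ)⁻¹)) = Dser := by
    ext n; rw [PowerSeries.coeff_mk, hDser, PowerSeries.coeff_mk, div_eq_mul_inv]
  intro n hn
  constructor
  · rw [hpn n hn]; simp
  -- the n = 1 case
  rcases Nat.exists_eq_add_of_le hn with ⟨n', rfl⟩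
  match n' with
  | 0 =>
      -- p 1 = X
      have hu : PowerSeries.constantCoeff (J 1) = 1 := by
        have h := congrArg (PowerSeries.coeff 1) hJ1
        rw [PowerSeries.coeff_mul, Finset.Nat.sum_antidiagonal_eq_sum_range_succ_mk] at h
        simp only [Finset.sum_range_succ, Finset.sum_range_zero] at h
        rw [hDser] at h
        simp only [PowerSeries.coeff_mk, PowerSeries.coeff_X] at h
        rw [show (1:ℕ) - 0 = 1 from rfl, show (1:ℕ) - 1 = 0 from rfl] at h
        have hs0 : (∑ k ∈ Finset.Icc l m, c k * (k : ℚ) ^ 0) = 0 := by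
          simpa using hc0
        have hs1 : (∑ k ∈ Finset.Icc l m, c k * (k : ℚ) ^ 1) = 1 := by
          rw [← hc1]; exact Finset.sum_congr rfl fun k _ => by ring
        rw [hs0, hs1] at h
        simpa [PowerSeries.coeff_zero_eq_constantCoeff] using h
      have hB10 : B 1 0 = 1 := by
        have h := congrArg (PowerSeries.constantCoeff) (hB 1)
        rw [map_mul] at h
        have hcc : PowerSeries.constantCoeff
            (PowerSeries.map (Polynomial.C : ℚ →+* Polynomial ℚ) (J 1))
            = Polynomial.C (PowerSeries.constantCoeff (J 1)) := by
          rw [← PowerSeries.coeff_zero_eq_constantCoeff, PowerSeries.coeff_map,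
            PowerSeries.coeff_zero_eq_constantCoeff]
        rw [hcc, hu, hE, PowerSeries.constantCoeff_mk, PowerSeries.constantCoeff_mk] at h
        simpa using h.symm
      have hp1 : p 1 = Polynomial.X := by
        rw [hpn 1 le_rfl]
        norm_num [hB10]
      simp only [hp1, hp0]
      have : ∀ k ∈ Finset.Icc l m,
          c k • (Polynomial.X : Polynomial ℚ).comp (Polynomial.X + Polynomial.C (k:ℚ))
          = c k • (Polynomial.X : Polynomial ℚ) + Polynomial.C (c k * k) := by
        intro k _
        rw [Polynomial.X_comp, smul_add]
        congr 1
        rw [Polynomial.smul_C, smul_eq_mul]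
      rw [Finset.sum_congr rfl this, Finset.sum_add_distrib, ← Finset.sum_smul, hc0, ← map_sum]
      have : (∑ k ∈ Finset.Icc l m, c k * (k:ℚ)) = 1 := by
        rw [← hc1]; exact Finset.sum_congr rfl fun k _ => by ring
      rw [this]
      norm_num
  | Nat.succ j =>
      -- n = j + 2
      have hn2 : 1 + (j + 1) = j + 2 := by omega
      rw [hn2]
      have hsub : j + 2 - 1 = j + 1 := rfl
      rw [hsub]
      set Q : Polynomial ℚ := B ((j:ℤ) + 1) j with hQ
      set B1 : Polynomial ℚ := B ((j:ℤ) + 1) (j + 1) with hB1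
      have hfacne : (j.factorial : ℚ) ≠ 0 := Nat.cast_ne_zero.mpr j.factorial_ne_zero
      have hfacne1 : ((j+1).factorial : ℚ) ≠ 0 := Nat.cast_ne_zero.mpr (j+1).factorial_ne_zero
      have hj1ne : ((j:ℚ) + 1) ≠ 0 := by positivity
      have hfacsucc : (((j+1).factorial : ℚ)) = ((j:ℚ)+1) * (j.factorial : ℚ) := by
        rw [Nat.factorial_succ]; push_cast; ring
      -- A1 : first weighted sum
      have A1 : ∑ k ∈ Finset.Icc l m, c k • ((B ((j:ℤ)+2) (j+1)).comp (Polynomial.X + Polynomial.C (k:ℚ)))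
          = ((j:ℚ) + 1) • Q := by
        have hs := sumB l m c J B hB ((j:ℤ)+2) (j+1)
        rw [hD'] at hs
        have h1 : J ((j:ℤ)+2) * Dser = PowerSeries.X * J ((j:ℤ)+1) := by
          have h := JD ((j:ℤ)+2)
          rw [show ((j:ℤ)+2) - 1 = (j:ℤ)+1 from by ring] at h
          exact h
        have hser : PowerSeries.map (Polynomial.C : ℚ →+* Polynomial ℚ) (J ((j:ℤ)+2) * Dser) * E
            = PowerSeries.X * (PowerSeries.mk fun n => ((n.factorial : ℚ)⁻¹) • B ((j:ℤ)+1) n) := by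
          rw [h1, map_mul, PowerSeries.map_X, mul_assoc, hB ((j:ℤ)+1)]
        rw [hser, PowerSeries.coeff_succ_X_mul, PowerSeries.coeff_mk] at hs
        rw [hs, smul_smul, hfacsucc]
        congr 1
        field_simp
      -- A2 : second weighted sum
      have h5 : J ((j:ℤ)+2) = J ((j:ℤ)+1) * J 1 := by
        rw [show ((j:ℤ)+2) = ((j:ℤ)+1) + 1 from by ring, hJadd]
      have JDj1 : J ((j:ℤ)+1) * Dser = PowerSeries.X * J (j:ℤ) := by
        have h := JD ((j:ℤ)+1)
        rw [show ((j:ℤ)+1) - 1 = (j:ℤ) from by ring] at h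
        exact h
      have eqP : J ((j:ℤ)+2) * d⁄dX ℚ Dser
          = J ((j:ℤ)+1) - PowerSeries.X * (J (j:ℤ) * d⁄dX ℚ (J 1)) := by
        linear_combination (d⁄dX ℚ Dser) * h5 + (J ((j:ℤ)+1)) * e1 - (d⁄dX ℚ (J 1)) * JDj1
      set U : PowerSeries (Polynomial ℚ) :=
        PowerSeries.map (Polynomial.C : ℚ →+* Polynomial ℚ) (J (j:ℤ) * d⁄dX ℚ (J 1)) * E with hU
      have hd1 : d⁄dX ℚ (J ((j:ℤ)+1)) = (((j+1 : ℕ)) : ℚ) • (J (j:ℤ) * d⁄dX ℚ (J 1)) := by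
        rw [derivJ J hJ0 hJadd ((j:ℤ)+1), show ((j:ℤ)+1) - 1 = (j:ℤ) from by ring,
          PowerSeries.smul_eq_C_mul]
        congr 1
      have hUkey : (((j+1 : ℕ)) : ℚ) • U
          = d⁄dX (Polynomial ℚ) (PowerSeries.mk fun n => ((n.factorial : ℚ)⁻¹) • B ((j:ℤ)+1) n)
            - PowerSeries.C (Polynomial.X : Polynomial ℚ) *
              (PowerSeries.mk fun n => ((n.factorial : ℚ)⁻¹) • B ((j:ℤ)+1) n) := by
        have step1 : (((j+1 : ℕ)) : ℚ) • U
            = PowerSeries.map (Polynomial.C : ℚ →+* Polynomial ℚ) (d⁄dX ℚ (J ((j:ℤ)+1))) * E := by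
          rw [hd1, mapC_smul, smul_mul_assoc, hU]
        have step2 : PowerSeries.map (Polynomial.C : ℚ →+* Polynomial ℚ) (d⁄dX ℚ (J ((j:ℤ)+1))) * E
            = d⁄dX (Polynomial ℚ) (PowerSeries.map (Polynomial.C : ℚ →+* Polynomial ℚ) (J ((j:ℤ)+1)) * E)
              - PowerSeries.C (Polynomial.X : Polynomial ℚ) *
                (PowerSeries.map (Polynomial.C : ℚ →+* Polynomial ℚ) (J ((j:ℤ)+1)) * E) := by
          rw [deriv_mul', mapC_deriv, hE, derivE, ← hE]
          ring
        rw [step1, step2, hB ((j:ℤ)+1)]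
      have hcoefU : (((j+1 : ℕ)) : ℚ) • (PowerSeries.coeff j U)
          = ((((j+1).factorial : ℚ)⁻¹) • B1) * (((j : Polynomial ℚ)) + 1)
            - Polynomial.X * (((j.factorial : ℚ)⁻¹) • Q) := by
        have h := congrArg (PowerSeries.coeff j) hUkey
        rw [PowerSeries.coeff_smul, map_sub, PowerSeries.coeff_derivative, PowerSeries.coeff_C_mul,
          PowerSeries.coeff_mk, PowerSeries.coeff_mk] at h
        rw [h, hB1, hQ]
      have A2 : ∑ k ∈ Finset.Icc l m, (c k * (k:ℚ)) • ((B ((j:ℤ)+2) (j+1)).comp (Polynomial.X + Polynomial.C (k:ℚ)))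
          = Polynomial.X * Q := by
        have hs2 := sumB l m (fun k => c k * (k:ℚ)) J B hB ((j:ℤ)+2) (j+1)
        rw [hW2, eqP] at hs2
        have hser2 : PowerSeries.map (Polynomial.C : ℚ →+* Polynomial ℚ)
              (J ((j:ℤ)+1) - PowerSeries.X * (J (j:ℤ) * d⁄dX ℚ (J 1))) * E
            = (PowerSeries.mk fun n => ((n.factorial : ℚ)⁻¹) • B ((j:ℤ)+1) n)
              - PowerSeries.X * U := by
          rw [map_sub, sub_mul, map_mul, PowerSeries.map_X, hB ((j:ℤ)+1), hU, mul_assoc]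
        rw [hser2, map_sub, PowerSeries.coeff_mk, PowerSeries.coeff_succ_X_mul] at hs2
        -- express coeff j U
        have hcU : (PowerSeries.coeff j U)
            = ((j:ℚ)+1)⁻¹ • (((((j+1).factorial : ℚ)⁻¹) • B1) * (((j : Polynomial ℚ)) + 1)
                - Polynomial.X * (((j.factorial : ℚ)⁻¹) • Q)) := by
          have h := congrArg (fun q => ((j:ℚ)+1)⁻¹ • q) hcoefU
          simp only [smul_smul] at h
          rw [show ((j:ℚ)+1)⁻¹ * (((j+1:ℕ)):ℚ) = 1 from by push_cast; field_simp] at h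
          rw [one_smul] at h
          exact h
        simp only [← hB1] at hs2
        rw [hcU] at hs2
        rw [hs2]
        have hmulcast : ∀ q : Polynomial ℚ, q * ((j : Polynomial ℚ) + 1) = ((j:ℚ)+1) • q := by
          intro q; rw [Polynomial.smul_eq_C_mul, map_add, map_one, map_natCast]; ring
        simp only [hmulcast, mul_smul_comm, smul_sub, smul_smul]
        match_scalars <;> (rw [hfacsucc]; field_simp) <;> norm_num
      -- assemble
      have hp2 : p (j + 2) = Polynomial.X * B ((j:ℤ)+2) (j+1) := by
        rw [hpn (j+2) (by omega)]
        norm_num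
      have hp1' : p (j + 1) = Polynomial.X * Q := by
        rw [hpn (j+1) (by omega), hQ]
        norm_num
      rw [hp2, hp1']
      have hsplit : ∀ k ∈ Finset.Icc l m,
          c k • ((Polynomial.X * B ((j:ℤ)+2) (j+1)).comp (Polynomial.X + Polynomial.C (k:ℚ)))
          = Polynomial.X * (c k • ((B ((j:ℤ)+2) (j+1)).comp (Polynomial.X + Polynomial.C (k:ℚ))))
            + (c k * (k:ℚ)) • ((B ((j:ℤ)+2) (j+1)).comp (Polynomial.X + Polynomial.C (k:ℚ))) := by
        intro k _
        rw [Polynomial.mul_comp, Polynomial.X_comp, add_mul, smul_add]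
        congr 1
        · rw [mul_smul_comm]
        · rw [← Polynomial.smul_eq_C_mul, smul_smul]
      rw [Finset.sum_congr rfl hsplit, Finset.sum_add_distrib, ← Finset.mul_sum, A1, A2]
      push_cast
      simp only [mul_smul_comm]
      match_scalars
      ring
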